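/- For n, m, r ≥ 1, the set equality (1_n × Sh(m,r)) · Sh(n, m+r) = (Sh(n,m) × 1_r) · Sh(n+m, r) holds, where both sides are subsets of S_{n+m+r}; moreover this set equals Sh(n,m,r), the set of (n,m,r)-shuffles. -/
import Mathlib
set_option maxHeartbeats 1000000
set_option linter.unusedVariables false


/-- Block product of permutations. -/
def blockProd {n m : ℕ} (σ : Equiv.Perm (Fin n)) (τ : Equiv.Perm (Fin m)) :
    Equiv.Perm (Fin (n + m)) :=
  (finSumFinEquiv : Fin n ⊕ Fin m ≃ Fin (n + m)).permCongr (Equiv.sumCongr σ τ)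

/-- `σ` is an `L`-shuffle for a composition `L = (n₁,…,n_r)`. -/
def IsCompShuffle (n : ℕ) (L : List ℕ) (σ : Equiv.Perm (Fin n)) : Prop :=
  ∀ (k : ℕ) (i j : Fin n), (L.take k).sum ≤ (i : ℕ) → (j : ℕ) < (L.take (k + 1)).sum →
    (i : ℕ) < (j : ℕ) → σ⁻¹ i < σ⁻¹ j

/-- Transport of a permutation along an equality of sizes. -/
def permCast {a b : ℕ} (h : a = b) (σ : Equiv.Perm (Fin a)) : Equiv.Perm (Fin b) :=
  (finCongr h).permCongr σ

lemma permCast_coe {a b : ℕ} (h : a = b) (σ : Equiv.Perm (Fin a)) (x : Fin b) :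
    ((permCast h σ) x : ℕ) = (σ ⟨x, by omega⟩ : ℕ) := by
  subst h; rfl

lemma permCast_inv {a b : ℕ} (h : a = b) (σ : Equiv.Perm (Fin a)) :
    (permCast h σ)⁻¹ = permCast h σ⁻¹ := by
  subst h; rfl

lemma permCast_permCast {a b : ℕ} (h : a = b) (σ : Equiv.Perm (Fin a)) :
    permCast h.symm (permCast h σ) = σ := by
  subst h; rfl

lemma blockProd_apply_lt {n m : ℕ} (σ : Equiv.Perm (Fin n)) (τ : Equiv.Perm (Fin m))
    (x : Fin (n + m)) (h : (x : ℕ) < n) : ((blockProd σ τ) x : ℕ) = σ ⟨x, h⟩ := by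
  have hx : finSumFinEquiv.symm x = Sum.inl ⟨(x : ℕ), h⟩ := by
    rw [Equiv.symm_apply_eq]
    exact Fin.ext (by simp)
  simp [blockProd, Equiv.permCongr_apply, hx]

lemma blockProd_apply_ge {n m : ℕ} (σ : Equiv.Perm (Fin n)) (τ : Equiv.Perm (Fin m))
    (x : Fin (n + m)) (h : n ≤ (x : ℕ)) :
    ((blockProd σ τ) x : ℕ) = n + τ ⟨(x : ℕ) - n, by omega⟩ := by
  have hx : finSumFinEquiv.symm x = Sum.inr ⟨(x : ℕ) - n, by omega⟩ := by
    rw [Equiv.symm_apply_eq]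
    exact Fin.ext (by simp; omega)
  simp [blockProd, Equiv.permCongr_apply, hx]

lemma blockProd_mul {n m : ℕ} (σ σ' : Equiv.Perm (Fin n)) (τ τ' : Equiv.Perm (Fin m)) :
    blockProd σ τ * blockProd σ' τ' = blockProd (σ * σ') (τ * τ') := by
  ext x
  simp only [blockProd, Equiv.Perm.mul_apply, Equiv.permCongr_apply, Equiv.symm_apply_apply]
  rcases finSumFinEquiv.symm x with y | y <;> simp

lemma blockProd_one {n m : ℕ} : blockProd (1 : Equiv.Perm (Fin n)) (1 : Equiv.Perm (Fin m)) = 1 := by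
  ext x
  simp only [blockProd, Equiv.permCongr_apply]
  rcases hy : finSumFinEquiv.symm x with y | y <;>
    simp [← hy]

lemma blockProd_inv {n m : ℕ} (σ : Equiv.Perm (Fin n)) (τ : Equiv.Perm (Fin m)) :
    (blockProd σ τ)⁻¹ = blockProd σ⁻¹ τ⁻¹ := by
  refine inv_eq_of_mul_eq_one_right ?_
  rw [blockProd_mul]
  simp [blockProd_one]
set_option linter.unnecessarySimpa false


def IncOn {N : ℕ} (σ : Equiv.Perm (Fin N)) (a b : ℕ) : Prop :=
  ∀ i j : Fin N, a ≤ (i : ℕ) → (j : ℕ) < b → (i : ℕ) < (j : ℕ) → σ⁻¹ i < σ⁻¹ j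

lemma isCompShuffle_pair {a b : ℕ} (σ : Equiv.Perm (Fin (a + b))) :
    IsCompShuffle (a + b) [a, b] σ ↔ IncOn σ 0 a ∧ IncOn σ a (a + b) := by
  constructor
  · intro h
    exact ⟨fun i j hi hj => h 0 i j (by simpa) (by simpa), fun i j hi hj => h 1 i j (by simpa) (by simpa)⟩
  · rintro ⟨h0, h1⟩ k i j hi hj hij
    match k with
    | 0 => exact h0 i j (by simpa using hi) (by simpa using hj) hij
    | 1 => exact h1 i j (by simpa using hi) (by simpa using hj) hij
    | (k + 2) =>
      have htake : List.take (k + 2) [a, b] = [a, b] :=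
        List.take_of_length_le (by simp only [List.length_cons, List.length_nil]; omega)
      have hi' : a + b ≤ (i : ℕ) := by rw [htake] at hi; simp at hi; omega
      exact absurd i.2 (by omega)

lemma isCompShuffle_triple {a b c : ℕ} (σ : Equiv.Perm (Fin (a + b + c))) :
    IsCompShuffle (a + b + c) [a, b, c] σ ↔
      IncOn σ 0 a ∧ IncOn σ a (a + b) ∧ IncOn σ (a + b) (a + b + c) := by
  constructor
  · intro h
    exact ⟨fun i j hi hj => h 0 i j (by simpa) (by simpa),
      fun i j hi hj => h 1 i j (by simpa) (by simpa),
      fun i j hi hj => h 2 i j (by simp; omega) (by simp; omega)⟩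
  · rintro ⟨h0, h1, h2⟩ k i j hi hj hij
    match k with
    | 0 => exact h0 i j (by simpa using hi) (by simpa using hj) hij
    | 1 => exact h1 i j (by simpa using hi) (by simpa using hj) hij
    | 2 => exact h2 i j (by simp at hi; omega) (by simp at hj; omega) hij
    | (k + 3) =>
      have htake : List.take (k + 3) [a, b, c] = [a, b, c] :=
        List.take_of_length_le (by simp only [List.length_cons, List.length_nil]; omega)
      have hi' : a + b + c ≤ (i : ℕ) := by rw [htake] at hi; simp at hi; omega
      exact absurd i.2 (by omega)

lemma sort_inv_lt {N M : ℕ} {f : Fin N → Fin M} (hf : Function.Injective f)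
    {i j : Fin N} (h : f i < f j) : (Tuple.sort f)⁻¹ i < (Tuple.sort f)⁻¹ j := by
  have hg : StrictMono (f ∘ Tuple.sort f) :=
    (Tuple.monotone_sort f).strictMono_of_injective (hf.comp (Tuple.sort f).injective)
  have e1 : (f ∘ Tuple.sort f) ((Tuple.sort f)⁻¹ i) = f i := by simp
  have e2 : (f ∘ Tuple.sort f) ((Tuple.sort f)⁻¹ j) = f j := by simp
  rw [← hg.lt_iff_lt, e1, e2]
  exact h

lemma exists_sort_decomp {N M : ℕ} (f : Fin N → Fin M) (hf : Function.Injective f) :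
    ∃ τ : Equiv.Perm (Fin N),
      (∀ i j : Fin N, f i < f j → τ⁻¹ i < τ⁻¹ j) ∧ StrictMono (f ∘ τ) :=
  ⟨Tuple.sort f, fun _ _ h => sort_inv_lt hf h,
    (Tuple.monotone_sort f).strictMono_of_injective (hf.comp (Tuple.sort f).injective)⟩

lemma incOn_permCast {a b : ℕ} (h : a = b) (σ : Equiv.Perm (Fin a)) (u v : ℕ) :
    IncOn (permCast h σ) u v ↔ IncOn σ u v := by
  subst h; rfl

lemma permCast_mul {a b : ℕ} (h : a = b) (σ τ : Equiv.Perm (Fin a)) :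
    permCast h (σ * τ) = permCast h σ * permCast h τ := by
  subst h; rfl

/-- `(1_n × Sh(m,r)) · Sh(n,m+r) = (Sh(n,m) × 1_r) · Sh(n+m,r) = Sh(n,m,r)`. -/
theorem shuffle_associativity_sets (n m r : ℕ) (hn : 1 ≤ n) (hm : 1 ≤ m) (hr : 1 ≤ r)
    (δ : Equiv.Perm (Fin (n + m + r))) :
    ((∃ (τ : Equiv.Perm (Fin (m + r))) (σ : Equiv.Perm (Fin (n + (m + r)))),
        IsCompShuffle (m + r) [m, r] τ ∧ IsCompShuffle (n + (m + r)) [n, m + r] σ ∧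
        δ = permCast (by omega) (blockProd (1 : Equiv.Perm (Fin n)) τ * σ)) ↔
      IsCompShuffle (n + m + r) [n, m, r] δ) ∧
    ((∃ (ω : Equiv.Perm (Fin (n + m))) (lam : Equiv.Perm (Fin (n + m + r))),
        IsCompShuffle (n + m) [n, m] ω ∧ IsCompShuffle (n + m + r) [n + m, r] lam ∧
        δ = blockProd ω (1 : Equiv.Perm (Fin r)) * lam) ↔
      IsCompShuffle (n + m + r) [n, m, r] δ) := by
  have h1 : n + (m + r) = n + m + r := (Nat.add_assoc n m r).symm
  constructor
  · constructor
    · -- forward: decomposition implies shuffle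
      rintro ⟨τ, σ, hτ, hσ, rfl⟩
      rw [isCompShuffle_pair] at hτ hσ
      obtain ⟨hτ1, hτ2⟩ := hτ
      obtain ⟨hσ1, hσ2⟩ := hσ
      rw [isCompShuffle_triple]
      have hPinv : (blockProd (1 : Equiv.Perm (Fin n)) τ * σ)⁻¹
          = σ⁻¹ * blockProd 1 τ⁻¹ := by
        rw [mul_inv_rev, blockProd_inv, inv_one]
      refine ⟨?_, ?_, ?_⟩
      · rw [incOn_permCast]
        intro i j _ hj hij
        rw [hPinv]
        simp only [Equiv.Perm.mul_apply]
        have hbi : ((blockProd (1 : Equiv.Perm (Fin n)) τ⁻¹) i : ℕ) = (i : ℕ) :=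
          blockProd_apply_lt _ _ i (show (i : ℕ) < n by omega)
        have hbj : ((blockProd (1 : Equiv.Perm (Fin n)) τ⁻¹) j : ℕ) = (j : ℕ) :=
          blockProd_apply_lt _ _ j (show (j : ℕ) < n by omega)
        exact hσ1 _ _ (Nat.zero_le _) (by omega) (by omega)
      · rw [incOn_permCast]
        intro i j hi hj hij
        rw [hPinv]
        simp only [Equiv.Perm.mul_apply]
        have hpi : (i : ℕ) - n < m + r := by omega
        have hpj : (j : ℕ) - n < m + r := by omega
        have hbi : ((blockProd (1 : Equiv.Perm (Fin n)) τ⁻¹) i : ℕ)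
            = n + (τ⁻¹ ⟨(i : ℕ) - n, hpi⟩ : ℕ) :=
          blockProd_apply_ge _ _ i (show n ≤ (i : ℕ) by omega)
        have hbj : ((blockProd (1 : Equiv.Perm (Fin n)) τ⁻¹) j : ℕ)
            = n + (τ⁻¹ ⟨(j : ℕ) - n, hpj⟩ : ℕ) :=
          blockProd_apply_ge _ _ j (show n ≤ (j : ℕ) by omega)
        have ht : τ⁻¹ ⟨(i : ℕ) - n, hpi⟩ < τ⁻¹ ⟨(j : ℕ) - n, hpj⟩ :=
          hτ1 _ _ (Nat.zero_le _) (show (j : ℕ) - n < m by omega)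
            (show (i : ℕ) - n < (j : ℕ) - n by omega)
        rw [Fin.lt_def] at ht
        exact hσ2 _ _ (by omega) (Fin.is_lt _) (by omega)
      · rw [incOn_permCast]
        intro i j hi hj hij
        rw [hPinv]
        simp only [Equiv.Perm.mul_apply]
        have hpi : (i : ℕ) - n < m + r := by omega
        have hpj : (j : ℕ) - n < m + r := by omega
        have hbi : ((blockProd (1 : Equiv.Perm (Fin n)) τ⁻¹) i : ℕ)
            = n + (τ⁻¹ ⟨(i : ℕ) - n, hpi⟩ : ℕ) :=
          blockProd_apply_ge _ _ i (show n ≤ (i : ℕ) by omega)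
        have hbj : ((blockProd (1 : Equiv.Perm (Fin n)) τ⁻¹) j : ℕ)
            = n + (τ⁻¹ ⟨(j : ℕ) - n, hpj⟩ : ℕ) :=
          blockProd_apply_ge _ _ j (show n ≤ (j : ℕ) by omega)
        have ht : τ⁻¹ ⟨(i : ℕ) - n, hpi⟩ < τ⁻¹ ⟨(j : ℕ) - n, hpj⟩ :=
          hτ2 _ _ (show m ≤ (i : ℕ) - n by omega) (show (j : ℕ) - n < m + r by omega)
            (show (i : ℕ) - n < (j : ℕ) - n by omega)
        rw [Fin.lt_def] at ht
        exact hσ2 _ _ (by omega) (Fin.is_lt _) (by omega)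
    · -- backward: shuffle implies decomposition
      intro hδ
      rw [isCompShuffle_triple] at hδ
      obtain ⟨hδ1, hδ2, hδ3⟩ := hδ
      have hfinj : Function.Injective
          (fun y : Fin (m + r) => δ⁻¹ (⟨n + (y : ℕ), by omega⟩ : Fin (n + m + r))) := by
        intro a b hab
        simp only at hab
        have h3 : n + (a : ℕ) = n + (b : ℕ) := congrArg Fin.val ((δ⁻¹).injective hab)
        exact Fin.ext (by omega)
      obtain ⟨τ, hτr, hg⟩ := exists_sort_decomp
        (fun y : Fin (m + r) => δ⁻¹ (⟨n + (y : ℕ), by omega⟩ : Fin (n + m + r))) hfinj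
      refine ⟨τ, permCast h1.symm ((permCast h1 (blockProd 1 τ))⁻¹ * δ), ?_, ?_, ?_⟩
      · rw [isCompShuffle_pair]
        constructor
        · intro i j _ hj hij
          refine hτr _ _ ?_
          exact hδ2 ⟨n + (i : ℕ), by omega⟩ ⟨n + (j : ℕ), by omega⟩
            (show n ≤ n + (i : ℕ) from Nat.le_add_right _ _)
            (show n + (j : ℕ) < n + m by omega) (show n + (i : ℕ) < n + (j : ℕ) by omega)
        · intro i j hi hj hij
          refine hτr _ _ ?_
          exact hδ3 ⟨n + (i : ℕ), by omega⟩ ⟨n + (j : ℕ), by omega⟩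
            (show n + m ≤ n + (i : ℕ) by omega)
            (show n + (j : ℕ) < n + m + r by omega) (show n + (i : ℕ) < n + (j : ℕ) by omega)
      · rw [isCompShuffle_pair]
        constructor
        · rw [incOn_permCast]
          intro i j _ hj hij
          rw [mul_inv_rev, inv_inv]
          simp only [Equiv.Perm.mul_apply]
          have hbi : ((permCast h1 (blockProd (1 : Equiv.Perm (Fin n)) τ)) i : ℕ) = (i : ℕ) := by
            rw [permCast_coe]
            exact blockProd_apply_lt (1 : Equiv.Perm (Fin n)) τ
              ⟨(i : ℕ), by omega⟩ (show (i : ℕ) < n by omega)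
          have hbj : ((permCast h1 (blockProd (1 : Equiv.Perm (Fin n)) τ)) j : ℕ) = (j : ℕ) := by
            rw [permCast_coe]
            exact blockProd_apply_lt (1 : Equiv.Perm (Fin n)) τ
              ⟨(j : ℕ), by omega⟩ (show (j : ℕ) < n by omega)
          exact hδ1 _ _ (Nat.zero_le _) (by omega) (by omega)
        · rw [incOn_permCast]
          intro i j hi hj hij
          rw [mul_inv_rev, inv_inv]
          simp only [Equiv.Perm.mul_apply]
          have hpi : (i : ℕ) - n < m + r := by omega
          have hpj : (j : ℕ) - n < m + r := by omega
          have hbi : ((permCast h1 (blockProd (1 : Equiv.Perm (Fin n)) τ)) i : ℕ)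
              = n + (τ ⟨(i : ℕ) - n, hpi⟩ : ℕ) := by
            rw [permCast_coe]
            exact blockProd_apply_ge _ _ _ (show n ≤ (i : ℕ) by omega)
          have hbj : ((permCast h1 (blockProd (1 : Equiv.Perm (Fin n)) τ)) j : ℕ)
              = n + (τ ⟨(j : ℕ) - n, hpj⟩ : ℕ) := by
            rw [permCast_coe]
            exact blockProd_apply_ge _ _ _ (show n ≤ (j : ℕ) by omega)
          have hBi : (permCast h1 (blockProd (1 : Equiv.Perm (Fin n)) τ)) i
              = ⟨n + (τ ⟨(i : ℕ) - n, hpi⟩ : ℕ), by omega⟩ := Fin.ext hbi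
          have hBj : (permCast h1 (blockProd (1 : Equiv.Perm (Fin n)) τ)) j
              = ⟨n + (τ ⟨(j : ℕ) - n, hpj⟩ : ℕ), by omega⟩ := Fin.ext hbj
          rw [hBi, hBj]
          exact hg (Fin.mk_lt_mk.mpr (by omega))
      · have e1 : blockProd (1 : Equiv.Perm (Fin n)) τ
            = permCast h1.symm (permCast h1 (blockProd 1 τ)) := (permCast_permCast h1 _).symm
        nth_rewrite 1 [e1]
        rw [← permCast_mul, mul_inv_cancel_left]
        exact (permCast_permCast h1.symm δ).symm
  · constructor
    · -- forward
      rintro ⟨ω, lam, hω, hlam, rfl⟩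
      rw [isCompShuffle_pair] at hω hlam
      obtain ⟨hω1, hω2⟩ := hω
      obtain ⟨hlam1, hlam2⟩ := hlam
      rw [isCompShuffle_triple]
      have hPinv : (blockProd ω (1 : Equiv.Perm (Fin r)) * lam)⁻¹
          = lam⁻¹ * blockProd ω⁻¹ 1 := by
        rw [mul_inv_rev, blockProd_inv, inv_one]
      refine ⟨?_, ?_, ?_⟩
      · intro i j _ hj hij
        rw [hPinv]
        simp only [Equiv.Perm.mul_apply]
        have hpi : (i : ℕ) < n + m := by omega
        have hpj : (j : ℕ) < n + m := by omega
        have hbi : ((blockProd ω⁻¹ (1 : Equiv.Perm (Fin r))) i : ℕ)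
            = (ω⁻¹ ⟨(i : ℕ), hpi⟩ : ℕ) := blockProd_apply_lt _ _ i hpi
        have hbj : ((blockProd ω⁻¹ (1 : Equiv.Perm (Fin r))) j : ℕ)
            = (ω⁻¹ ⟨(j : ℕ), hpj⟩ : ℕ) := blockProd_apply_lt _ _ j hpj
        have ht : ω⁻¹ ⟨(i : ℕ), hpi⟩ < ω⁻¹ ⟨(j : ℕ), hpj⟩ :=
          hω1 _ _ (Nat.zero_le _) (show (j : ℕ) < n from hj) hij
        rw [Fin.lt_def] at ht
        have hb2 := (ω⁻¹ ⟨(j : ℕ), hpj⟩).is_lt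
        exact hlam1 _ _ (Nat.zero_le _) (by omega) (by omega)
      · intro i j hi hj hij
        rw [hPinv]
        simp only [Equiv.Perm.mul_apply]
        have hpi : (i : ℕ) < n + m := by omega
        have hpj : (j : ℕ) < n + m := by omega
        have hbi : ((blockProd ω⁻¹ (1 : Equiv.Perm (Fin r))) i : ℕ)
            = (ω⁻¹ ⟨(i : ℕ), hpi⟩ : ℕ) := blockProd_apply_lt _ _ i hpi
        have hbj : ((blockProd ω⁻¹ (1 : Equiv.Perm (Fin r))) j : ℕ)
            = (ω⁻¹ ⟨(j : ℕ), hpj⟩ : ℕ) := blockProd_apply_lt _ _ j hpj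
        have ht : ω⁻¹ ⟨(i : ℕ), hpi⟩ < ω⁻¹ ⟨(j : ℕ), hpj⟩ :=
          hω2 _ _ (show n ≤ (i : ℕ) from hi) (show (j : ℕ) < n + m from hpj) hij
        rw [Fin.lt_def] at ht
        have hb2 := (ω⁻¹ ⟨(j : ℕ), hpj⟩).is_lt
        exact hlam1 _ _ (Nat.zero_le _) (by omega) (by omega)
      · intro i j hi hj hij
        rw [hPinv]
        simp only [Equiv.Perm.mul_apply]
        have hbi : ((blockProd ω⁻¹ (1 : Equiv.Perm (Fin r))) i : ℕ) = (i : ℕ) := by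
          rw [blockProd_apply_ge _ _ i (show n + m ≤ (i : ℕ) from hi)]
          simp
          omega
        have hbj : ((blockProd ω⁻¹ (1 : Equiv.Perm (Fin r))) j : ℕ) = (j : ℕ) := by
          rw [blockProd_apply_ge _ _ j (show n + m ≤ (j : ℕ) by omega)]
          simp
          omega
        exact hlam2 _ _ (by omega) (by omega) (by omega)
    · -- backward
      intro hδ
      rw [isCompShuffle_triple] at hδ
      obtain ⟨hδ1, hδ2, hδ3⟩ := hδ
      have hfinj : Function.Injective
          (fun y : Fin (n + m) => δ⁻¹ (⟨(y : ℕ), by omega⟩ : Fin (n + m + r))) := by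
        intro a b hab
        simp only at hab
        have h4 := (δ⁻¹).injective hab
        have h3 : (a : ℕ) = (b : ℕ) := by simpa [Fin.ext_iff] using h4
        exact Fin.ext h3
      obtain ⟨ω, hωr, hg⟩ := exists_sort_decomp
        (fun y : Fin (n + m) => δ⁻¹ (⟨(y : ℕ), by omega⟩ : Fin (n + m + r))) hfinj
      refine ⟨ω, (blockProd ω (1 : Equiv.Perm (Fin r)))⁻¹ * δ, ?_, ?_, ?_⟩
      · rw [isCompShuffle_pair]
        constructor
        · intro i j _ hj hij
          refine hωr _ _ ?_
          exact hδ1 ⟨(i : ℕ), by omega⟩ ⟨(j : ℕ), by omega⟩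
            (Nat.zero_le _) (show (j : ℕ) < n from hj) hij
        · intro i j hi hj hij
          refine hωr _ _ ?_
          exact hδ2 ⟨(i : ℕ), by omega⟩ ⟨(j : ℕ), by omega⟩
            (show n ≤ (i : ℕ) from hi) (show (j : ℕ) < n + m from hj) hij
      · rw [isCompShuffle_pair]
        constructor
        · intro i j _ hj hij
          rw [mul_inv_rev, inv_inv]
          simp only [Equiv.Perm.mul_apply]
          have hpi : (i : ℕ) < n + m := by omega
          have hpj : (j : ℕ) < n + m := by omega
          have hBi : (blockProd ω (1 : Equiv.Perm (Fin r))) i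
              = ⟨(ω ⟨(i : ℕ), hpi⟩ : ℕ), by omega⟩ :=
            Fin.ext (blockProd_apply_lt _ _ i hpi)
          have hBj : (blockProd ω (1 : Equiv.Perm (Fin r))) j
              = ⟨(ω ⟨(j : ℕ), hpj⟩ : ℕ), by omega⟩ :=
            Fin.ext (blockProd_apply_lt _ _ j hpj)
          rw [hBi, hBj]
          exact hg (Fin.mk_lt_mk.mpr hij)
        · intro i j hi hj hij
          rw [mul_inv_rev, inv_inv]
          simp only [Equiv.Perm.mul_apply]
          have hBi : (blockProd ω (1 : Equiv.Perm (Fin r))) i = i := by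
            refine Fin.ext ?_
            rw [blockProd_apply_ge _ _ i (show n + m ≤ (i : ℕ) from hi)]
            simp
            omega
          have hBj : (blockProd ω (1 : Equiv.Perm (Fin r))) j = j := by
            refine Fin.ext ?_
            rw [blockProd_apply_ge _ _ j (show n + m ≤ (j : ℕ) by omega)]
            simp
            omega
          rw [hBi, hBj]
          exact hδ3 i j hi (by omega) hij
      · exact (mul_inv_cancel_left _ _).symm
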